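/- Let q₀ > 0, θ ∈ ℝ, and let M be an invertible 2×2 complex matrix. Define σ₂ = [[0,−i],[i,0]], e^{−iθσ₃} = diag(e^{−iθ}, e^{iθ}), and for z ∈ ℂ, z ≠ 0, set E(z) = I₂ + (q₀/z)·σ₂·e^{−iθσ₃}·M⁻¹. Then det E(z) = 1 − q₀²/z² holds for all z ≠ 0 if and only if M₂₁ = e^{−2iθ} M₁₂ and det M = 1. -/

import Mathlib

open Complex Matrix

/-- The matrix `E(z) = I₂ + (q₀/z)·σ₂·e^{−iθσ₃}·M⁻¹`. -/
noncomputable def Emat (q₀ θ : ℝ) (M : Matrix (Fin 2) (Fin 2) ℂ) (z : ℂ) :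
    Matrix (Fin 2) (Fin 2) ℂ :=
  1 + ((q₀ : ℂ) / z) •
    (!![0, -Complex.I; Complex.I, 0] *
      !![Complex.exp (-(Complex.I * θ)), 0; 0, Complex.exp (Complex.I * θ)] * M⁻¹)

lemma det_Emat_eq (q₀ θ : ℝ) (M : Matrix (Fin 2) (Fin 2) ℂ) (hM : IsUnit M.det)
    (z : ℂ) (hz : z ≠ 0) :
    (Emat q₀ θ M z).det =
      1 + ((q₀ : ℂ)/z) * ((Complex.I * Complex.exp (Complex.I*θ) * M 1 0
        - Complex.I * Complex.exp (-(Complex.I*θ)) * M 0 1) / M.det)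
      - (q₀ : ℂ)^2/(z^2 * M.det) := by
  have hd : M.det ≠ 0 := hM.ne_zero
  have hd' : M 0 0 * M 1 1 - M 0 1 * M 1 0 ≠ 0 := by
    rwa [Matrix.det_fin_two] at hd
  have hu : Complex.exp (Complex.I*θ) ≠ 0 := Complex.exp_ne_zero _
  have hv : Complex.exp (-(Complex.I*θ)) = (Complex.exp (Complex.I*θ))⁻¹ := by
    rw [← Complex.exp_neg]
  unfold Emat
  rw [Matrix.inv_def, Ring.inverse_eq_inv']
  simp only [hv, Matrix.det_fin_two, Matrix.adjugate_fin_two, Matrix.mul_apply,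
    Fin.sum_univ_two, Matrix.add_apply, Matrix.smul_apply, Matrix.one_apply,
    Matrix.cons_val', Matrix.cons_val_zero, Matrix.cons_val_one, Matrix.head_cons,
    Matrix.head_fin_const, Matrix.empty_val', Matrix.cons_val_fin_one, smul_eq_mul]
  simp only [Matrix.of_apply, Matrix.cons_val', Matrix.cons_val_zero, Matrix.cons_val_one,
    Matrix.cons_val_fin_one, Matrix.head_cons, Matrix.empty_val', Fin.isValue, Matrix.cons_val,
    Fin.reduceEq, ite_true, ite_false, if_true, if_false, one_ne_zero, zero_ne_one]
  field_simp
  ring_nf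
  simp only [Complex.I_sq]
  ring

/-- `det E(z) = 1 − q₀²/z²` for all `z ≠ 0` iff `M₂₁ = e^{−2iθ}M₁₂` and
`det M = 1`. -/
theorem det_Emat_iff (q₀ θ : ℝ) (hq₀ : 0 < q₀) (M : Matrix (Fin 2) (Fin 2) ℂ)
    (hM : IsUnit M.det) :
    (∀ z : ℂ, z ≠ 0 → (Emat q₀ θ M z).det = 1 - (q₀ : ℂ) ^ 2 / z ^ 2) ↔
      (M 1 0 = Complex.exp (-(2 * Complex.I * θ)) * M 0 1 ∧ M.det = 1) := by
  have hq : (q₀:ℂ) ≠ 0 := by simpa using (ne_of_gt hq₀)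
  have hd : M.det ≠ 0 := hM.ne_zero
  have hu : Complex.exp (Complex.I*(θ:ℂ)) ≠ 0 := Complex.exp_ne_zero _
  constructor
  · intro h
    have h1 := h 1 one_ne_zero
    have h2 := h (-1) (by norm_num)
    rw [det_Emat_eq q₀ θ M hM 1 one_ne_zero] at h1
    rw [det_Emat_eq q₀ θ M hM (-1) (by norm_num)] at h2
    rw [div_neg] at h2
    field_simp at h1 h2
    -- h1 : M.det + q₀ * X - q₀² = (1 - q₀²) * M.det
    -- h2 : M.det - q₀ * X - q₀² = (1 - q₀²) * M.det   (after clearing)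
    have hT : (q₀:ℂ) * (Complex.I * Complex.exp (Complex.I*θ) * M 1 0
        - Complex.I * Complex.exp (-(Complex.I*θ)) * M 0 1) = 0 := by
      linear_combination (h1 - h2) / 2
    have hX : Complex.I * Complex.exp (Complex.I*θ) * M 1 0
        - Complex.I * Complex.exp (-(Complex.I*θ)) * M 0 1 = 0 :=
      (mul_eq_zero.mp hT).resolve_left hq
    have hD2 : (q₀:ℂ)^2 * M.det = (q₀:ℂ)^2 * 1 := by
      rw [mul_one]; linear_combination (h1 + h2) / 2
    have hDet : M.det = 1 := mul_left_cancel₀ (pow_ne_zero 2 hq) hD2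
    refine ⟨?_, hDet⟩
    have h3 : Complex.I * (Complex.exp (Complex.I*θ) * M 1 0
        - Complex.exp (-(Complex.I*θ)) * M 0 1) = 0 := by linear_combination hX
    have h4 : Complex.exp (Complex.I*θ) * M 1 0
        - Complex.exp (-(Complex.I*θ)) * M 0 1 = 0 :=
      (mul_eq_zero.mp h3).resolve_left Complex.I_ne_zero
    have he : Complex.exp (-(2 * Complex.I * (θ:ℂ)))
        = Complex.exp (-(Complex.I*(θ:ℂ))) * (Complex.exp (Complex.I*(θ:ℂ)))⁻¹ := by
      rw [← Complex.exp_neg, ← Complex.exp_add]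
      congr 1
      ring
    rw [he]
    field_simp
    linear_combination h4
  · rintro ⟨hc, hdet⟩ z hz
    have he : Complex.exp (Complex.I*(θ:ℂ)) * Complex.exp (-(2 * Complex.I * (θ:ℂ)))
        = Complex.exp (-(Complex.I*(θ:ℂ))) := by
      rw [← Complex.exp_add]
      congr 1
      ring
    have hzero : Complex.I * Complex.exp (Complex.I*θ) * M 1 0
        - Complex.I * Complex.exp (-(Complex.I*θ)) * M 0 1 = 0 := by
      rw [hc]
      linear_combination (Complex.I * M 0 1) * he
    rw [det_Emat_eq q₀ θ M hM z hz, hdet, hzero]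
    ring
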